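/- Let (A, B, C, m) be an acyclic partial matching on an S-complex (S, κ) and fix σ ∈ A. Define Ā = A \ {σ}, B̄ = B \ {m(σ)}, C̄ = C, and m̄ the restriction of m to Ā. Then (Ā, B̄, C̄, m̄) is an acyclic partial matching on the reduced S-complex (S̄, κ̄) obtained by reduction of the pair (m(σ), σ). -/

import Mathlib

/-- An `S`-complex over a ring `R`: a finite graded set with a coincidence index `κ`
raising dimension by one and whose induced boundary squares to zero. -/
structure SComplex (R S : Type*) [CommRing R] [Fintype S] [DecidableEq S] where
  dim : S → ℕ
  κ : S → S → R
  dim_rule : ∀ σ τ, κ σ τ ≠ 0 → dim σ = dim τ + 1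
  dsq : ∀ σ ξ, ∑ τ, κ σ τ * κ τ ξ = 0

/-- A partial matching `(A, B, C, m)` on an `S`-complex: a partition of `S` together
with a bijection `m : A → B` such that `κ(m τ, τ)` is invertible for `τ ∈ A`. -/
structure PartialMatching {R S : Type*} [CommRing R] [Fintype S] [DecidableEq S]
    (X : SComplex R S) where
  A : Set S
  B : Set S
  C : Set S
  m : S → S
  cover : A ∪ B ∪ C = Set.univ
  disjAB : Disjoint A B
  disjAC : Disjoint A C
  disjBC : Disjoint B C
  bij : Set.BijOn m A B
  unit : ∀ τ ∈ A, IsUnit (X.κ (m τ) τ)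

/-- Acyclicity of a partial matching: there is no nontrivial sequence
`σ₀, m σ₀, σ₁, m σ₁, …, σ_p, m σ_p, σ_{p+1} = σ₀` with `σ_{i+1} ≠ σ_i` and `σ_{i+1}`
a primary face of `m σ_i`. -/
def PartialMatching.Acyclic {R S : Type*} [CommRing R] [Fintype S] [DecidableEq S]
    {X : SComplex R S} (M : PartialMatching X) : Prop :=
  ¬ ∃ (p : ℕ) (σ : ℕ → S), (∀ i ≤ p, σ i ∈ M.A) ∧ σ (p + 1) = σ 0 ∧
      ∀ i ≤ p, σ (i + 1) ≠ σ i ∧ X.κ (M.m (σ i)) (σ (i + 1)) ≠ 0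

/-- The reduced coincidence index obtained by reduction of the pair `(m σ₀, σ₀)`:
`κ̄(η, ξ) = κ(η, ξ) − κ(η, σ₀)·κ(m σ₀, ξ)/κ(m σ₀, σ₀)`. -/
noncomputable def reducedKappa {R S : Type*} [CommRing R] [Fintype S] [DecidableEq S]
    (X : SComplex R S) (M : PartialMatching X) (σ₀ : S) : S → S → R :=
  fun η ξ => X.κ η ξ - X.κ η σ₀ * Ring.inverse (X.κ (M.m σ₀) σ₀) * X.κ (M.m σ₀) ξ

section Aux

variable {α : Type*}

private lemma getD_mem' : ∀ (l : List α) (d : α) (i : ℕ), l.getD i d ∈ l ∨ l.getD i d = d := by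
  intro l
  induction l with
  | nil => intro d i; right; simp [List.getD]
  | cons c l ih =>
      intro d i
      cases i with
      | zero => left; simp
      | succ j =>
          rcases ih d j with h | h
          · left; simp only [List.getD_cons_succ]; exact List.mem_cons_of_mem _ h
          · right; simpa using h

private lemma getD_last (a d : α) : ∀ l : List α, (l ++ [a]).getD l.length d = a := by
  intro l
  induction l with
  | nil => simp
  | cons c l ih => simpa using ih

private lemma chain_getD (R : α → α → Prop) :
    ∀ (l : List α) (a b : α), List.Chain R a (l ++ [b]) →
      ∀ i ≤ l.length, R ((a :: (l ++ [b])).getD i b) ((a :: (l ++ [b])).getD (i+1) b) := by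
  intro l
  induction l with
  | nil =>
      intro a b h i hi
      have hi0 : i = 0 := Nat.le_zero.mp hi
      subst hi0
      simpa using (List.isChain_pair.mp h)
  | cons c l ih =>
      intro a b h i hi
      rcases List.chain_cons.mp h with ⟨hac, hch⟩
      cases i with
      | zero => simpa using hac
      | succ j =>
          have := ih c b hch j (by simpa using hi)
          simpa using this

end Aux

/-- the restriction `(Ā, B̄, C̄, m̄)` of an acyclic partial matching, with
`Ā = A \ {σ₀}`, `B̄ = B \ {m σ₀}`, `C̄ = C`, is an acyclic partial matching on the
reduced `S`-complex `(S̄, κ̄)`, where `S̄ = S \ {σ₀, m σ₀}`. -/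

theorem stmt5 {R S : Type*} [CommRing R] [IsDomain R] [IsPrincipalIdealRing R]
    [Fintype S] [DecidableEq S] (X : SComplex R S) (M : PartialMatching X)
    (hac : M.Acyclic) {σ₀ : S} (hσ₀ : σ₀ ∈ M.A) :
    ((M.A \ {σ₀}) ∪ (M.B \ {M.m σ₀}) ∪ M.C = Set.univ \ {σ₀, M.m σ₀}) ∧
    Disjoint (M.A \ {σ₀}) (M.B \ {M.m σ₀}) ∧
    Disjoint (M.A \ {σ₀}) M.C ∧
    Disjoint (M.B \ {M.m σ₀}) M.C ∧
    Set.BijOn M.m (M.A \ {σ₀}) (M.B \ {M.m σ₀}) ∧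
    (∀ τ ∈ M.A \ {σ₀}, IsUnit (reducedKappa X M σ₀ (M.m τ) τ)) ∧
    ¬ ∃ (p : ℕ) (σ : ℕ → S), (∀ i ≤ p, σ i ∈ M.A \ {σ₀}) ∧ σ (p + 1) = σ 0 ∧
        ∀ i ≤ p, σ (i + 1) ≠ σ i ∧ reducedKappa X M σ₀ (M.m (σ i)) (σ (i + 1)) ≠ 0 := by
  classical
  have hmB : M.m σ₀ ∈ M.B := M.bij.mapsTo hσ₀
  have hAnB : ∀ x ∈ M.A, x ∉ M.B := fun x hx => Set.disjoint_left.mp M.disjAB hx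
  have hAnC : ∀ x ∈ M.A, x ∉ M.C := fun x hx => Set.disjoint_left.mp M.disjAC hx
  have hBnC : ∀ x ∈ M.B, x ∉ M.C := fun x hx => Set.disjoint_left.mp M.disjBC hx
  refine ⟨?_, ?_, ?_, ?_, ?_, ?_, ?_⟩
  · -- cover
    ext x
    have hx : x ∈ M.A ∪ M.B ∪ M.C := by rw [M.cover]; trivial
    simp only [Set.mem_union, Set.mem_diff, Set.mem_singleton_iff, Set.mem_univ,
      Set.mem_insert_iff, true_and]
    constructor
    · rintro ((⟨hxa, hxs⟩ | ⟨hxb, hxm⟩) | hxc)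
      · rintro (rfl | rfl)
        · exact hxs rfl
        · exact hAnB _ hxa hmB
      · rintro (rfl | rfl)
        · exact hAnB _ hσ₀ hxb
        · exact hxm rfl
      · rintro (rfl | rfl)
        · exact hAnC _ hσ₀ hxc
        · exact hBnC _ hmB hxc
    · intro hne
      push_neg at hne
      rcases hx with ((hxa | hxb) | hxc)
      · exact Or.inl (Or.inl ⟨hxa, hne.1⟩)
      · exact Or.inl (Or.inr ⟨hxb, hne.2⟩)
      · exact Or.inr hxc
  · exact M.disjAB.mono Set.diff_subset Set.diff_subset
  · exact M.disjAC.mono_left Set.diff_subset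
  · exact M.disjBC.mono_left Set.diff_subset
  · -- BijOn
    refine ⟨fun τ hτ => ⟨M.bij.mapsTo hτ.1, ?_⟩, M.bij.injOn.mono Set.diff_subset, ?_⟩
    · intro h
      exact hτ.2 (M.bij.injOn hτ.1 hσ₀ h)
    · intro b hb
      obtain ⟨a, ha, hab⟩ := M.bij.surjOn hb.1
      refine ⟨a, ⟨ha, ?_⟩, hab⟩
      rintro rfl
      exact hb.2 hab.symm
  · -- unit
    intro τ hτ
    have hτA : τ ∈ M.A := hτ.1
    have hτne : τ ≠ σ₀ := hτ.2
    have hz : X.κ (M.m τ) σ₀ = 0 ∨ X.κ (M.m σ₀) τ = 0 := by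
      by_contra h
      push_neg at h
      refine hac ⟨1, fun i => if i % 2 = 0 then σ₀ else τ, ?_, ?_, ?_⟩
      · intro i hi
        interval_cases i
        · simpa using hσ₀
        · simpa using hτA
      · simp
      · intro i hi
        interval_cases i
        · refine ⟨by simpa using hτne, by simpa using h.2⟩
        · refine ⟨by simpa using (Ne.symm hτne), by simpa using h.1⟩
    have heq : reducedKappa X M σ₀ (M.m τ) τ = X.κ (M.m τ) τ := by
      rcases hz with h | h <;> simp [reducedKappa, h]
    rw [heq]
    exact M.unit τ hτA
  · -- acyclicity
    rintro ⟨p, σ, hmem, hcyc, hstep⟩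
    set Rel : S → S → Prop := fun a b => b ≠ a ∧ X.κ (M.m a) b ≠ 0 with hRel
    have key : ∀ a b : S, a ∈ M.A \ {σ₀} → b ≠ a → b ≠ σ₀ →
        reducedKappa X M σ₀ (M.m a) b ≠ 0 →
        List.Chain Rel a [b] ∨ List.Chain Rel a [σ₀, b] := by
      intro a b ha hba hbs hk
      by_cases h0 : X.κ (M.m a) b = 0
      · right
        have hprod : X.κ (M.m a) σ₀ * Ring.inverse (X.κ (M.m σ₀) σ₀) * X.κ (M.m σ₀) b ≠ 0 := by
          intro h
          apply hk
          simp [reducedKappa, h0, h]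
        have h1 : X.κ (M.m a) σ₀ ≠ 0 := by
          intro h; exact hprod (by simp [h])
        have h2 : X.κ (M.m σ₀) b ≠ 0 := by
          intro h; exact hprod (by simp [h])
        exact List.Chain.cons ⟨Ne.symm ha.2, h1⟩ (List.Chain.cons ⟨hbs, h2⟩ List.Chain.nil)
      · exact Or.inl (List.Chain.cons ⟨hba, h0⟩ List.Chain.nil)
    have splice : ∀ q : ℕ, ∀ τ : ℕ → S, (∀ i ≤ q, τ i ∈ M.A \ {σ₀}) → τ (q+1) ≠ σ₀ →
        (∀ i ≤ q, τ (i+1) ≠ τ i ∧ reducedKappa X M σ₀ (M.m (τ i)) (τ (i+1)) ≠ 0) →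
        ∃ l : List S, (∀ x ∈ l, x ∈ M.A) ∧ List.Chain Rel (τ 0) (l ++ [τ (q+1)]) := by
      intro q
      induction q with
      | zero =>
          intro τ h1 h2 h3
          rcases key (τ 0) (τ 1) (h1 0 le_rfl) (h3 0 le_rfl).1 h2 (h3 0 le_rfl).2 with h | h
          · exact ⟨[], by simp, by simpa using h⟩
          · exact ⟨[σ₀], by simpa using hσ₀, by simpa using h⟩
      | succ q ih =>
          intro τ h1 h2 h3
          obtain ⟨l, hl, hch⟩ := ih τ (fun i hi => h1 i (Nat.le_succ_of_le hi))
            (h1 (q+1) le_rfl).2 (fun i hi => h3 i (Nat.le_succ_of_le hi))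
          rcases key (τ (q+1)) (τ (q+2)) (h1 (q+1) le_rfl) (h3 (q+1) le_rfl).1 h2
              (h3 (q+1) le_rfl).2 with h | h
          · refine ⟨l ++ [τ (q+1)], ?_, ?_⟩
            · intro x hx
              rcases List.mem_append.mp hx with hx | hx
              · exact hl x hx
              · rw [List.mem_singleton.mp hx]; exact (h1 (q+1) le_rfl).1
            · have he : l ++ [τ (q+1)] ++ [τ (q+2)] = l ++ (τ (q+1) :: [τ (q+2)]) := by simp
              rw [he]
              exact (List.isChain_cons_split).mpr ⟨hch, h⟩
          · refine ⟨l ++ [τ (q+1), σ₀], ?_, ?_⟩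
            · intro x hx
              rcases List.mem_append.mp hx with hx | hx
              · exact hl x hx
              · rcases List.mem_cons.mp hx with rfl | hx
                · exact (h1 (q+1) le_rfl).1
                · rw [List.mem_singleton.mp hx]; exact hσ₀
            · have he : l ++ [τ (q+1), σ₀] ++ [τ (q+2)] = l ++ (τ (q+1) :: [σ₀, τ (q+2)]) := by
                simp
              rw [he]
              exact (List.isChain_cons_split).mpr ⟨hch, h⟩
    have h0s : σ (p+1) ≠ σ₀ := by rw [hcyc]; exact (hmem 0 (Nat.zero_le p)).2
    obtain ⟨l, hl, hch⟩ := splice p σ hmem h0s hstep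
    rw [hcyc] at hch
    apply hac
    refine ⟨l.length, fun i => (σ 0 :: (l ++ [σ 0])).getD i (σ 0), ?_, ?_, ?_⟩
    · intro i hi
      show (σ 0 :: (l ++ [σ 0])).getD i (σ 0) ∈ M.A
      rcases getD_mem' (σ 0 :: (l ++ [σ 0])) (σ 0) i with h | h
      · rcases List.mem_cons.mp h with h | h
        · rw [h]; exact (hmem 0 (Nat.zero_le p)).1
        · rcases List.mem_append.mp h with h | h
          · exact hl _ h
          · rw [List.mem_singleton.mp h]; exact (hmem 0 (Nat.zero_le p)).1
      · rw [h]; exact (hmem 0 (Nat.zero_le p)).1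
    · show (σ 0 :: (l ++ [σ 0])).getD (l.length + 1) (σ 0) = (σ 0 :: (l ++ [σ 0])).getD 0 (σ 0)
      simp only [List.getD_cons_succ, List.getD_cons_zero]
      exact getD_last (σ 0) (σ 0) l
    · intro i hi
      exact chain_getD Rel l (σ 0) (σ 0) hch i hi
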